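/- Let U and Y be complex Hilbert spaces, F a closed subspace of U, and ω = (ω₁, ω₂) : F → Y ⊕ U a contraction. Let Γ_{Φ_{2,2}} : U → ℓ²(ℕ, Y) be the contraction defined by Γ_{Φ_{2,2}} u = (ω₁ Π_F (ω₂ Π_F)ⁿ u)_{n≥0}. Then Γ_{Φ_{2,2}} is a co-isometry if and only if Π_Y D_{ω*} = 0 and ω₁ Π_F (ω₂ Π_F)ⁿ Π_U D_{ω*} = 0 for every integer n ≥ 0 (equivalently, the Redheffer coefficient Φ_{2,1}(λ) = Π_Y D_{ω*} + λ ω₁ Π_F (I − λ ω₂ Π_F)^{-1} Π_U D_{ω*} vanishes for every λ in the open unit disc). -/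

import Mathlib

open scoped ENNReal
local notation "⟪" x ", " y "⟫" => (inner ℂ x y : ℂ)
open ContinuousLinearMap

set_option maxHeartbeats 2000000 in
/-- the operator `Γ_{Φ₂,₂} : U → ℓ²(ℕ, Y)`, `u ↦ (ω₁ Π_F (ω₂ Π_F)ⁿ u)ₙ`, is a
co-isometry iff `Π_Y D_{ω*} = 0` and `ω₁ Π_F (ω₂ Π_F)ⁿ Π_U D_{ω*} = 0` for every `n ≥ 0`
(i.e. the Redheffer coefficient `Φ₂,₁` vanishes identically). -/
theorem stmt_9
    {U Y : Type*}
    [NormedAddCommGroup U] [InnerProductSpace ℂ U] [CompleteSpace U]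
    [NormedAddCommGroup Y] [InnerProductSpace ℂ Y] [CompleteSpace Y]
    (F : Submodule ℂ U) [CompleteSpace F]
    (ω₁ : F →L[ℂ] Y) (ω₂ : F →L[ℂ] U)
    (ω : F →L[ℂ] WithLp 2 (Y × U))
    (hωdef : ∀ f : F, ω f = (WithLp.equiv 2 (Y × U)).symm (ω₁ f, ω₂ f))
    (hωcontr : ‖ω‖ ≤ 1)
    (Dω : WithLp 2 (Y × U) →L[ℂ] WithLp 2 (Y × U))
    (hDωpos : Dω.IsPositive)
    (hDωsq : Dω.comp Dω = 1 - ω.comp ω.adjoint)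
    (Γ : U →L[ℂ] lp (fun _ : ℕ => Y) 2) (hΓnorm : ‖Γ‖ ≤ 1)
    (hΓ : ∀ (u : U) (n : ℕ),
      Γ u n = (ω₁.comp ((F.orthogonalProjection).comp
        ((ω₂.comp (F.orthogonalProjection)) ^ n))) u) :
    Γ.comp Γ.adjoint = 1 ↔
      ((∀ x : WithLp 2 (Y × U), (WithLp.equiv 2 (Y × U) (Dω x)).1 = 0) ∧
        ∀ (n : ℕ) (x : WithLp 2 (Y × U)),
          (ω₁.comp ((F.orthogonalProjection).comp
            ((ω₂.comp (F.orthogonalProjection)) ^ n)))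
            (WithLp.equiv 2 (Y × U) (Dω x)).2 = 0) := by
  classical
  set P : U →L[ℂ] F := F.orthogonalProjection with hPdef
  set T : U →L[ℂ] U := ω₂.comp P with hTdef
  set A : ℕ → U →L[ℂ] Y := fun n => ω₁.comp (P.comp (T ^ n)) with hAdef
  have hAn : ∀ n, ω₁.comp (P.comp (T ^ n)) = A n := fun _ => rfl
  simp only [hAn] at hΓ ⊢
  -- basic adjoint computations
  have hTadj : T.adjoint = F.subtypeL.comp ω₂.adjoint := by
    rw [hTdef, adjoint_comp, hPdef, Submodule.adjoint_orthogonalProjectionOnto]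
  have hA0 : A 0 = ω₁.comp P := by
    rw [hAdef]
    simp only [pow_zero, ContinuousLinearMap.one_def, ContinuousLinearMap.comp_id]
  have hA0adj : (A 0).adjoint = F.subtypeL.comp ω₁.adjoint := by
    rw [hA0, adjoint_comp, hPdef, Submodule.adjoint_orthogonalProjectionOnto]
  have hAsucc : ∀ n, A (n + 1) = (A n).comp T := by
    intro n
    ext u
    simp only [hAdef, ContinuousLinearMap.comp_apply, pow_succ,
      ContinuousLinearMap.mul_apply]
  have hAsuccadj : ∀ n, (A (n + 1)).adjoint = T.adjoint.comp (A n).adjoint := by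
    intro n
    rw [hAsucc n, adjoint_comp]
  have hPsub : ∀ v : F, P (F.subtypeL v) = v := by
    intro v
    rw [hPdef, Submodule.subtypeL_apply]
    exact Submodule.orthogonalProjectionOnto_mem_subspace_eq_self v
  -- adjoint of ω
  have hωadj : ∀ x : WithLp 2 (Y × U),
      ω.adjoint x
        = ω₁.adjoint (WithLp.equiv 2 (Y × U) x).1
          + ω₂.adjoint (WithLp.equiv 2 (Y × U) x).2 := by
    intro x
    apply ext_inner_left ℂ
    intro f
    rw [adjoint_inner_right, hωdef, inner_add_right, adjoint_inner_right,
      adjoint_inner_right]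
    simp [WithLp.prod_inner_apply, WithLp.equiv_symm_apply, WithLp.equiv_symm_apply,
      WithLp.equiv_apply, WithLp.equiv_apply]
  -- self-adjointness of Dω
  have hsa : ∀ a b : WithLp 2 (Y × U), ⟪Dω a, b⟫ = ⟪a, Dω b⟫ := by
    intro a b
    conv_lhs => rw [← hDωpos.isSelfAdjoint.adjoint_eq]
    rw [adjoint_inner_left]
  -- pointwise form of `Dω² = 1 - ω ω*`
  have hDD : ∀ x : WithLp 2 (Y × U), Dω (Dω x) = x - ω (ω.adjoint x) := by
    intro x
    have := congrArg (fun S : WithLp 2 (Y × U) →L[ℂ] WithLp 2 (Y × U) => S x) hDωsq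
    simpa using this
  -- the fundamental defect identity
  have hdefect : ∀ x : WithLp 2 (Y × U),
      ⟪Dω x, Dω x⟫ = ⟪x, x⟫ - ⟪ω.adjoint x, ω.adjoint x⟫ := by
    intro x
    rw [hsa x (Dω x), hDD x, inner_sub_right,
      ← ContinuousLinearMap.adjoint_inner_left ω (ω.adjoint x) x]
  -- Γ adjoint on basis vectors
  have hΓs : ∀ (n : ℕ) (y : Y), Γ.adjoint (lp.single 2 n y) = (A n).adjoint y := by
    intro n y
    apply ext_inner_left ℂ
    intro u
    rw [adjoint_inner_right, adjoint_inner_right, lp.inner_single_right, hΓ]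
  constructor
  · -- forward direction
    intro h
    have hnorm : ∀ (n : ℕ) (y : Y),
        ⟪(A n).adjoint y, (A n).adjoint y⟫ = ⟪y, y⟫ := by
      intro n y
      have hfix : Γ (Γ.adjoint (lp.single 2 n y)) = lp.single 2 n y := by
        have := congrArg (fun S : lp (fun _ : ℕ => Y) 2 →L[ℂ] lp (fun _ : ℕ => Y) 2
          => S (lp.single 2 n y)) h
        simpa using this
      rw [← hΓs, adjoint_inner_left, hfix, lp.inner_single_right,
        lp.single_apply_self]
    have hDY : ∀ y : Y, Dω ((WithLp.equiv 2 (Y × U)).symm (y, 0)) = 0 := by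
      intro y
      rw [← inner_self_eq_zero (𝕜 := ℂ), hdefect]
      have h1 : ⟪((WithLp.equiv 2 (Y × U)).symm (y, (0 : U)) : WithLp 2 (Y × U)),
          (WithLp.equiv 2 (Y × U)).symm (y, (0 : U))⟫ = ⟪y, y⟫ := by
        simp [WithLp.prod_inner_apply, WithLp.equiv_symm_apply, WithLp.equiv_symm_apply]
      have h2 : ω.adjoint ((WithLp.equiv 2 (Y × U)).symm (y, (0 : U)))
          = ω₁.adjoint y := by
        rw [hωadj]
        simp [WithLp.equiv_symm_apply, WithLp.equiv_symm_apply]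
      have h3 : ⟪ω₁.adjoint y, ω₁.adjoint y⟫
          = ⟪(A 0).adjoint y, (A 0).adjoint y⟫ := by
        rw [hA0adj]
        simp only [ContinuousLinearMap.comp_apply, Submodule.subtypeL_apply]
        rw [← Submodule.coe_inner]
      rw [h1, h2, h3, hnorm 0 y, sub_self]
    have hDU : ∀ (n : ℕ) (y : Y),
        Dω ((WithLp.equiv 2 (Y × U)).symm (0, (A n).adjoint y)) = 0 := by
      intro n y
      rw [← inner_self_eq_zero (𝕜 := ℂ), hdefect]
      have h1 : ⟪((WithLp.equiv 2 (Y × U)).symm ((0 : Y), (A n).adjoint y) :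
            WithLp 2 (Y × U)),
          (WithLp.equiv 2 (Y × U)).symm ((0 : Y), (A n).adjoint y)⟫
          = ⟪y, y⟫ := by
        simp only [WithLp.prod_inner_apply, WithLp.equiv_symm_apply,
          WithLp.equiv_symm_apply, inner_zero_left, zero_add]
        exact hnorm n y
      have h2 : ω.adjoint ((WithLp.equiv 2 (Y × U)).symm ((0 : Y), (A n).adjoint y))
          = ω₂.adjoint ((A n).adjoint y) := by
        rw [hωadj]
        simp [WithLp.equiv_symm_apply, WithLp.equiv_symm_apply]
      have h3 : ⟪ω₂.adjoint ((A n).adjoint y), ω₂.adjoint ((A n).adjoint y)⟫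
          = ⟪(A (n + 1)).adjoint y, (A (n + 1)).adjoint y⟫ := by
        rw [hAsuccadj, hTadj]
        simp only [ContinuousLinearMap.comp_apply, Submodule.subtypeL_apply]
        rw [← Submodule.coe_inner]
      rw [h1, h2, h3, hnorm (n + 1) y, sub_self]
    constructor
    · intro x
      rw [← inner_self_eq_zero (𝕜 := ℂ)]
      have h1 : ⟪(WithLp.equiv 2 (Y × U) (Dω x)).1,
            (WithLp.equiv 2 (Y × U) (Dω x)).1⟫
          = ⟪Dω x, (WithLp.equiv 2 (Y × U)).symm
              ((WithLp.equiv 2 (Y × U) (Dω x)).1, (0 : U))⟫ := by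
        simp [WithLp.prod_inner_apply, WithLp.equiv_symm_apply, WithLp.equiv_symm_apply,
          WithLp.equiv_apply, WithLp.equiv_apply]
      rw [h1, hsa, hDY, inner_zero_right]
    · intro n x
      rw [← inner_self_eq_zero (𝕜 := ℂ)]
      have h1 : ⟪A n (WithLp.equiv 2 (Y × U) (Dω x)).2,
            A n (WithLp.equiv 2 (Y × U) (Dω x)).2⟫
          = ⟪Dω x, (WithLp.equiv 2 (Y × U)).symm ((0 : Y),
              (A n).adjoint (A n (WithLp.equiv 2 (Y × U) (Dω x)).2))⟫ := by
        rw [← ContinuousLinearMap.adjoint_inner_right]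
        simp [WithLp.prod_inner_apply, WithLp.equiv_symm_apply, WithLp.equiv_symm_apply,
          WithLp.equiv_apply, WithLp.equiv_apply]
      rw [h1, hsa, hDU, inner_zero_right]
  · -- converse direction
    rintro ⟨h1, h2⟩
    -- consequences of the hypotheses
    have G1 : ∀ x : WithLp 2 (Y × U),
        ω₁ (ω.adjoint x) = (WithLp.equiv 2 (Y × U) x).1 := by
      intro x
      have h := h1 (Dω x)
      rw [hDD x, hωdef] at h
      simp only [WithLp.equiv_apply, WithLp.equiv_symm_apply, WithLp.ofLp_sub, WithLp.ofLp_toLp, Prod.fst_sub] at h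
      rw [sub_eq_zero] at h
      exact h.symm
    have G2 : ∀ (n : ℕ) (x : WithLp 2 (Y × U)),
        A n (WithLp.equiv 2 (Y × U) x).2 = A n (ω₂ (ω.adjoint x)) := by
      intro n x
      have h := h2 n (Dω x)
      rw [hDD x, hωdef] at h
      simp only [WithLp.equiv_apply, WithLp.equiv_symm_apply, WithLp.ofLp_sub, WithLp.ofLp_toLp,
        Prod.snd_sub, map_sub] at h
      rw [sub_eq_zero] at h
      exact h
    have hadjY : ∀ y : Y,
        ω.adjoint ((WithLp.equiv 2 (Y × U)).symm (y, (0 : U))) = ω₁.adjoint y := by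
      intro y
      rw [hωadj]
      simp [WithLp.equiv_symm_apply, WithLp.equiv_symm_apply]
    have hadjU : ∀ u : U,
        ω.adjoint ((WithLp.equiv 2 (Y × U)).symm ((0 : Y), u)) = ω₂.adjoint u := by
      intro u
      rw [hωadj]
      simp [WithLp.equiv_symm_apply, WithLp.equiv_symm_apply]
    -- ω₁ ω₁* = 1
    have keyA : ∀ y : Y, A 0 ((A 0).adjoint y) = y := by
      intro y
      rw [hA0adj, hA0]
      simp only [ContinuousLinearMap.comp_apply]
      rw [hPsub]
      have := G1 ((WithLp.equiv 2 (Y × U)).symm (y, (0 : U)))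
      rw [hadjY] at this
      simpa [WithLp.equiv_symm_apply] using this
    -- A n ω₂ ω₁* = 0
    have keyB : ∀ (n : ℕ) (y : Y), A n (ω₂ (ω₁.adjoint y)) = 0 := by
      intro n y
      have := G2 n ((WithLp.equiv 2 (Y × U)).symm (y, (0 : U)))
      rw [hadjY] at this
      simpa [WithLp.equiv_symm_apply] using this.symm
    -- A n ω₂ ω₂* = A n
    have keyC : ∀ (n : ℕ) (u : U), A n (ω₂ (ω₂.adjoint u)) = A n u := by
      intro n u
      have := G2 n ((WithLp.equiv 2 (Y × U)).symm ((0 : Y), u))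
      rw [hadjU] at this
      simpa [WithLp.equiv_symm_apply] using this.symm
    have key10 : ∀ (m : ℕ) (y : Y), A (m + 1) ((A 0).adjoint y) = 0 := by
      intro m y
      rw [hAsucc, hA0adj]
      simp only [ContinuousLinearMap.comp_apply]
      rw [hTdef]
      simp only [ContinuousLinearMap.comp_apply]
      rw [hPsub]
      exact keyB m y
    have key0n : ∀ (n : ℕ) (y : Y), A 0 ((A (n + 1)).adjoint y) = 0 := by
      intro n y
      rw [← inner_self_eq_zero (𝕜 := ℂ)]
      have e1 : ⟪A 0 ((A (n + 1)).adjoint y), A 0 ((A (n + 1)).adjoint y)⟫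
          = ⟪y, A (n + 1) ((A 0).adjoint (A 0 ((A (n + 1)).adjoint y)))⟫ := by
        rw [← ContinuousLinearMap.adjoint_inner_right (A 0), adjoint_inner_left]
      rw [e1, key10, inner_zero_right]
    have key : ∀ (m n : ℕ) (y : Y),
        A m ((A n).adjoint y) = if m = n then y else 0 := by
      intro m
      induction m with
      | zero =>
        intro n y
        cases n with
        | zero => simpa using keyA y
        | succ n => simpa using key0n n y
      | succ m ih =>
        intro n y
        cases n with
        | zero => simpa using key10 m y
        | succ n =>
          have e1 : A (m + 1) ((A (n + 1)).adjoint y) = A m ((A n).adjoint y) := by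
            rw [hAsucc, hAsuccadj, hTadj]
            simp only [ContinuousLinearMap.comp_apply]
            rw [hTdef]
            simp only [ContinuousLinearMap.comp_apply]
            rw [hPsub]
            exact keyC m ((A n).adjoint y)
          rw [e1, ih n y]
          simp [Nat.succ_inj]
    -- conclude: Γ Γ* = 1
    have hsingle : ∀ (n : ℕ) (y : Y),
        (Γ.comp Γ.adjoint) (lp.single 2 n y) = lp.single 2 n y := by
      intro n y
      rw [ContinuousLinearMap.comp_apply, hΓs]
      apply lp.ext
      funext m
      rw [hΓ, key m n y, lp.single_apply, Pi.single_apply]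
    apply ContinuousLinearMap.ext
    intro g
    have hsum : HasSum (fun n : ℕ => lp.single 2 n (g n)) g :=
      lp.hasSum_single (by norm_num) g
    have hsum2 : HasSum (fun n : ℕ => (Γ.comp Γ.adjoint) (lp.single 2 n (g n)))
        ((Γ.comp Γ.adjoint) g) := (Γ.comp Γ.adjoint).hasSum hsum
    simp only [hsingle] at hsum2
    rw [ContinuousLinearMap.one_apply]
    exact hsum2.unique hsum
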